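/- Let G be a finite metabelian group, K a maximal abelian normal subgroup of G with G/K abelian, and L ≤ K a subgroup such that K/L is cyclic and the G-core of L is trivial. Then the centralizer in G of the quotient K/L equals K; that is, {g ∈ G : [g,k] ∈ L for all k ∈ K} = K. -/

import Mathlib

/-- Let `G` be a finite metabelian group, `K` a maximal abelian normal subgroup of `G`
containing the derived subgroup (so `G/K` is abelian), and `L ≤ K` a subgroup such that
`K/L` is cyclic and the `G`-core of `L` is trivial. Then `C_G(K/L) = K`; that is,
`{g ∈ G : [g,k] ∈ L for all k ∈ K} = K`. -/
theorem stmt_7 (G : Type) [Group G] [Finite G]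
    (hmeta : ∀ a b : commutator G, a * b = b * a)
    (K : Subgroup G) (hKn : K.Normal)
    (hKab : ∀ a b : G, a ∈ K → b ∈ K → a * b = b * a)
    (hGK : commutator G ≤ K)
    (hmax : ∀ K' : Subgroup G, K'.Normal →
      (∀ a b : G, a ∈ K' → b ∈ K' → a * b = b * a) → K ≤ K' → K' = K)
    (L : Subgroup G) (hLK : L ≤ K)
    (hcyc : ∃ k ∈ K, ∀ x ∈ K, ∃ m : ℤ, x * (k ^ m)⁻¹ ∈ L)
    (hcore : ∀ N : Subgroup G, N.Normal → N ≤ L → N = ⊥) :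
    ∀ g : G, (∀ k ∈ K, g⁻¹ * k⁻¹ * g * k ∈ L) ↔ g ∈ K := by
  -- every commutator a⁻¹b⁻¹ab lies in K
  have hcommK : ∀ a b : G, a⁻¹ * b⁻¹ * a * b ∈ K := by
    intro a b
    open scoped commutatorElement in
    have : ⁅a⁻¹, b⁻¹⁆ ∈ commutator G :=
      Subgroup.commutator_mem_commutator (Subgroup.mem_top _) (Subgroup.mem_top _)
    have h2 := hGK this
    simpa [commutatorElement_def, mul_assoc] using h2
  intro g
  constructor
  · intro hg
    -- key identity: for c, k ∈ K, (g*c)⁻¹ * k⁻¹ * (g*c) * k = g⁻¹*k⁻¹*g*k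
    have key : ∀ c k : G, c ∈ K → k ∈ K →
        (g * c)⁻¹ * k⁻¹ * (g * c) * k = g⁻¹ * k⁻¹ * g * k := by
      intro c k hc hk
      set d := g⁻¹ * k⁻¹ * g * k with hd
      have hdK : d ∈ K := hcommK g k
      have e1 : (g * c)⁻¹ * k⁻¹ * (g * c) * k = c⁻¹ * (d * (k⁻¹ * (c * k))) := by
        rw [hd]; group
      rw [e1, hKab c k hc hk, ← mul_assoc k⁻¹ k c, inv_mul_cancel, one_mul,
        hKab d c hdK hc, ← mul_assoc, inv_mul_cancel, one_mul]
    -- the subgroup generated by the commutators [g,k]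
    set S : Set G := {x | ∃ k ∈ K, x = g⁻¹ * k⁻¹ * g * k} with hS
    set N : Subgroup G := Subgroup.closure S with hN
    have hNL : N ≤ L := by
      apply Subgroup.closure_le L |>.mpr
      rintro x ⟨k, hk, rfl⟩
      exact hg k hk
    have hNnormal : N.Normal := by
      constructor
      intro n hn x
      refine Subgroup.closure_induction ?_ ?_ ?_ ?_ hn
      · rintro y ⟨k, hk, rfl⟩
        -- x * (g⁻¹k⁻¹gk) * x⁻¹ = (xgx⁻¹)⁻¹ * (xkx⁻¹)⁻¹ * (xgx⁻¹) * (xkx⁻¹)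
        have hk' : x * k * x⁻¹ ∈ K := hKn.conj_mem k hk x
        have hcx : g⁻¹ * (x * g * x⁻¹) ∈ K := by
          have := hcommK g x⁻¹
          simpa [mul_assoc] using this
        have e2 : x * (g⁻¹ * k⁻¹ * g * k) * x⁻¹ =
            (x * g * x⁻¹)⁻¹ * (x * k * x⁻¹)⁻¹ * (x * g * x⁻¹) * (x * k * x⁻¹) := by
          group
        have e3 : x * g * x⁻¹ = g * (g⁻¹ * (x * g * x⁻¹)) := by group
        have := key (g⁻¹ * (x * g * x⁻¹)) (x * k * x⁻¹) hcx hk'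
        rw [← e3] at this
        rw [e2, this]
        exact Subgroup.subset_closure ⟨x * k * x⁻¹, hk', rfl⟩
      · simpa using N.one_mem
      · intro a b _ _ ha hb
        have : x * (a * b) * x⁻¹ = (x * a * x⁻¹) * (x * b * x⁻¹) := by group
        rw [this]; exact N.mul_mem ha hb
      · intro a _ ha
        have : x * a⁻¹ * x⁻¹ = (x * a * x⁻¹)⁻¹ := by group
        rw [this]; exact N.inv_mem ha
    have hNbot : N = ⊥ := hcore N hNnormal hNL
    -- so g commutes with every element of K
    have hgk : ∀ k ∈ K, g * k = k * g := by
      intro k hk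
      have : g⁻¹ * k⁻¹ * g * k ∈ N := Subgroup.subset_closure ⟨k, hk, rfl⟩
      rw [hNbot, Subgroup.mem_bot] at this
      have h1 : g * (g⁻¹ * k⁻¹ * g * k) = g * 1 := by rw [this]
      calc g * k = k * g * (g⁻¹ * k⁻¹ * g * k) := by group
        _ = k * g := by rw [this]; group
    -- the subgroup generated by K and g
    set H : Subgroup G := Subgroup.closure ((K : Set G) ∪ {g}) with hH
    have hgenComm : ∀ x ∈ ((K : Set G) ∪ {g}), ∀ y ∈ ((K : Set G) ∪ {g}),
        Commute x y := by
      rintro x (hx | rfl) y (hy | rfl)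
      · exact hKab x y hx hy
      · exact (hgk x hx).symm
      · exact hgk y hy
      · rfl
    have hHcomm1 : ∀ a ∈ H, ∀ y ∈ ((K : Set G) ∪ {g}), Commute a y := by
      intro a ha
      refine Subgroup.closure_induction ?_ ?_ ?_ ?_ ha
      · intro x hx y hy; exact hgenComm x hx y hy
      · intro y _; exact Commute.one_left y
      · intro p q _ _ hp hq y hy; exact (hp y hy).mul_left (hq y hy)
      · intro p _ hp y hy; exact (hp y hy).inv_left
    have hHcomm : ∀ a b : G, a ∈ H → b ∈ H → a * b = b * a := by
      intro a b ha hb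
      have : Commute b a := by
        refine Subgroup.closure_induction ?_ ?_ ?_ ?_ hb
        · intro y hy; exact (hHcomm1 a ha y hy).symm
        · exact Commute.one_left a
        · intro p q _ _ hp hq; exact hp.mul_left hq
        · intro p _ hp; exact hp.inv_left
      exact this.symm
    have hKH : K ≤ H := fun x hx =>
      Subgroup.subset_closure (Or.inl hx)
    have hgH : g ∈ H := Subgroup.subset_closure (Or.inr rfl)
    have hHnormal : H.Normal := by
      constructor
      intro h hh x
      refine Subgroup.closure_induction ?_ ?_ ?_ ?_ hh
      · rintro y (hy | hy)
        · exact hKH (hKn.conj_mem y hy x)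
        · have hy' : y = g := hy
          rw [hy']
          have hcx : g⁻¹ * (x * g * x⁻¹) ∈ K := by
            simpa [mul_assoc] using hcommK g x⁻¹
          have e3 : x * g * x⁻¹ = g * (g⁻¹ * (x * g * x⁻¹)) := by group
          rw [e3]
          exact H.mul_mem hgH (hKH hcx)
      · simpa using H.one_mem
      · intro a b _ _ ha hb
        have : x * (a * b) * x⁻¹ = (x * a * x⁻¹) * (x * b * x⁻¹) := by group
        rw [this]; exact H.mul_mem ha hb
      · intro a _ ha
        have : x * a⁻¹ * x⁻¹ = (x * a * x⁻¹)⁻¹ := by group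
        rw [this]; exact H.inv_mem ha
    have := hmax H hHnormal hHcomm hKH
    rw [← this]
    exact hgH
  · intro hgK k hk
    have : g * k = k * g := hKab g k hgK hk
    have h1 : g⁻¹ * k⁻¹ * g * k = 1 := by
      rw [show g⁻¹ * k⁻¹ * g * k = g⁻¹ * k⁻¹ * (g * k) by group, this]; group
    rw [h1]; exact L.one_mem
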